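/- Let (a_{i,j}) for i ∈ {1,2,3}, j ∈ {1,2} be positive integers and set a_i = a_{i,1} + a_{i,2} for each i. Then m(a₁,a₂,a₃;3) ≤ m(a_{1,1},a_{2,1},a_{3,1};3) + m(a_{1,1},a_{2,2},a_{3,2};3) + m(a_{1,2},a_{2,1},a_{3,2};3) + m(a_{1,2},a_{2,2},a_{3,1};3). -/

import Mathlib

namespace BP

/-- The `r`-neighbour bootstrap closure of `A₀` in `G`: the smallest set `S` containing `A₀`
such that every vertex with at least `r` neighbours in `S` belongs to `S`. -/
def closure {V : Type*} (G : SimpleGraph V) (r : ℕ) (A₀ : Set V) : Set V :=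
  ⋂₀ {S : Set V | A₀ ⊆ S ∧ ∀ v : V, r ≤ (G.neighborSet v ∩ S).ncard → v ∈ S}

/-- `A₀` percolates under the `r`-neighbour bootstrap process in `G`. -/
def Percolates {V : Type*} (G : SimpleGraph V) (r : ℕ) (A₀ : Set V) : Prop :=
  closure G r A₀ = Set.univ

/-- The minimum cardinality of a set percolating under the `r`-neighbour process in `G`. -/
noncomputable def minPerc {V : Type*} (G : SimpleGraph V) (r : ℕ) : ℕ :=
  sInf {n : ℕ | ∃ A₀ : Set V, Percolates G r A₀ ∧ A₀.ncard = n}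

/-- The three-dimensional grid graph `[a₁] × [a₂] × [a₃]` (vertices indexed from `0` via `Fin`). -/
def grid3 (a₁ a₂ a₃ : ℕ) : SimpleGraph (Fin a₁ × Fin a₂ × Fin a₃) where
  Adj u v :=
    (u.2 = v.2 ∧ ((u.1 : ℕ) + 1 = (v.1 : ℕ) ∨ (v.1 : ℕ) + 1 = (u.1 : ℕ))) ∨
    (u.1 = v.1 ∧ u.2.2 = v.2.2 ∧
      ((u.2.1 : ℕ) + 1 = (v.2.1 : ℕ) ∨ (v.2.1 : ℕ) + 1 = (u.2.1 : ℕ))) ∨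
    (u.1 = v.1 ∧ u.2.1 = v.2.1 ∧
      ((u.2.2 : ℕ) + 1 = (v.2.2 : ℕ) ∨ (v.2.2 : ℕ) + 1 = (u.2.2 : ℕ)))
  symm := by
    constructor
    rintro u v (⟨h, h'⟩ | ⟨h1, h2, h'⟩ | ⟨h1, h2, h'⟩)
    · exact Or.inl ⟨h.symm, h'.symm⟩
    · exact Or.inr (Or.inl ⟨h1.symm, h2.symm, h'.symm⟩)
    · exact Or.inr (Or.inr ⟨h1.symm, h2.symm, h'.symm⟩)
  loopless := by
    constructor
    rintro u (⟨-, h⟩ | ⟨-, -, h⟩ | ⟨-, -, h⟩) <;> omega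

/-- `m(a₁,a₂,a₃;3)`: minimum size of a percolating set for the 3-neighbour process. -/
noncomputable def m3 (a₁ a₂ a₃ : ℕ) : ℕ := minPerc (grid3 a₁ a₂ a₃) 3

section Generic
variable {V : Type*} {W : Type*}

lemma subset_closure (G : SimpleGraph V) (r : ℕ) (A₀ : Set V) : A₀ ⊆ closure G r A₀ :=
  fun v hv => Set.mem_sInter.2 fun _ hS => hS.1 hv

lemma closure_subset (G : SimpleGraph V) (r : ℕ) (A₀ S : Set V)
    (h1 : A₀ ⊆ S) (h2 : ∀ v, r ≤ (G.neighborSet v ∩ S).ncard → v ∈ S) :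
    closure G r A₀ ⊆ S := Set.sInter_subset_of_mem ⟨h1, h2⟩

lemma closure_closed [Finite V] (G : SimpleGraph V) (r : ℕ) (A₀ : Set V) (v : V)
    (h : r ≤ (G.neighborSet v ∩ closure G r A₀).ncard) : v ∈ closure G r A₀ := by
  refine Set.mem_sInter.2 fun S hS => hS.2 v ?_
  refine le_trans h (Set.ncard_le_ncard ?_ (Set.toFinite _))
  exact Set.inter_subset_inter_right _ (Set.sInter_subset_of_mem hS)

lemma infect [Finite V] (G : SimpleGraph V) (A₀ : Set V) {v n1 n2 n3 : V}
    (h12 : n1 ≠ n2) (h13 : n1 ≠ n3) (h23 : n2 ≠ n3)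
    (ha1 : G.Adj v n1) (ha2 : G.Adj v n2) (ha3 : G.Adj v n3)
    (hm1 : n1 ∈ closure G 3 A₀) (hm2 : n2 ∈ closure G 3 A₀) (hm3 : n3 ∈ closure G 3 A₀) :
    v ∈ closure G 3 A₀ := by
  apply closure_closed
  have hsub : {n1, n2, n3} ⊆ G.neighborSet v ∩ closure G 3 A₀ := by
    rintro x (rfl | rfl | rfl)
    · exact ⟨ha1, hm1⟩
    · exact ⟨ha2, hm2⟩
    · exact ⟨ha3, hm3⟩
  have h3 : ({n1, n2, n3} : Set V).ncard = 3 := by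
    rw [Set.ncard_insert_of_notMem (by simp [h12, h13]) (Set.toFinite _),
        Set.ncard_pair h23]
  calc (3 : ℕ) = ({n1, n2, n3} : Set V).ncard := h3.symm
    _ ≤ _ := Set.ncard_le_ncard hsub (Set.toFinite _)

lemma range_subset_closure [Finite W] (G : SimpleGraph V) (H : SimpleGraph W) (r : ℕ)
    (f : V → W) (hinj : Function.Injective f)
    (hadj : ∀ u v, G.Adj u v → H.Adj (f u) (f v))
    (A₀ : Set V) (hperc : Percolates G r A₀) (B : Set W) (hB : f '' A₀ ⊆ B) :
    Set.range f ⊆ closure H r B := by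
  have key : closure G r A₀ ⊆ f ⁻¹' (closure H r B) := by
    apply closure_subset
    · intro v hv; exact subset_closure H r B (hB ⟨v, hv, rfl⟩)
    · intro v hv
      refine Set.mem_preimage.2 (closure_closed H r B (f v) ?_)
      calc r ≤ (G.neighborSet v ∩ f ⁻¹' (closure H r B)).ncard := hv
        _ = (f '' (G.neighborSet v ∩ f ⁻¹' (closure H r B))).ncard :=
            (Set.ncard_image_of_injective _ hinj).symm
        _ ≤ _ := Set.ncard_le_ncard (by rintro _ ⟨u, ⟨hu1, hu2⟩, rfl⟩; exact ⟨hadj v u hu1, hu2⟩)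
              (Set.toFinite _)
  rintro _ ⟨v, rfl⟩
  exact key (by rw [hperc]; trivial)

lemma univ_percolates (G : SimpleGraph V) (r : ℕ) : Percolates G r Set.univ :=
  Set.eq_univ_of_univ_subset (subset_closure G r _)

lemma exists_minPerc (G : SimpleGraph V) (r : ℕ) :
    ∃ A₀ : Set V, Percolates G r A₀ ∧ A₀.ncard = minPerc G r := by
  have h : {n : ℕ | ∃ A₀ : Set V, Percolates G r A₀ ∧ A₀.ncard = n}.Nonempty :=
    ⟨Set.univ.ncard, Set.univ, univ_percolates G r, rfl⟩
  exact Nat.sInf_mem h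

lemma minPerc_le (G : SimpleGraph V) (r : ℕ) (A₀ : Set V) (h : Percolates G r A₀) :
    minPerc G r ≤ A₀.ncard := Nat.sInf_le ⟨A₀, h, rfl⟩

end Generic
section Grid
variable {b1 b2 b3 c1 c2 c3 : ℕ}

/-- Shift embedding of `Fin b` into `Fin c` by offset `d`. -/
def shift {b c : ℕ} (d : ℕ) (h : d + b ≤ c) : Fin b → Fin c :=
  fun x => ⟨d + x, by omega⟩

/-- Product of three shift embeddings. -/
def shift3 (d1 d2 d3 : ℕ) (h1 : d1 + b1 ≤ c1) (h2 : d2 + b2 ≤ c2) (h3 : d3 + b3 ≤ c3) :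
    Fin b1 × Fin b2 × Fin b3 → Fin c1 × Fin c2 × Fin c3 :=
  fun u => (shift d1 h1 u.1, shift d2 h2 u.2.1, shift d3 h3 u.2.2)

lemma shift3_injective (d1 d2 d3 : ℕ) (h1 : d1 + b1 ≤ c1) (h2 : d2 + b2 ≤ c2)
    (h3 : d3 + b3 ≤ c3) : Function.Injective (shift3 d1 d2 d3 h1 h2 h3) := by
  rintro ⟨x, y, z⟩ ⟨x', y', z'⟩ h
  simp only [shift3, shift, Prod.mk.injEq, Fin.mk.injEq] at h
  obtain ⟨hx, hy, hz⟩ := h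
  refine Prod.ext (Fin.ext ?_) (Prod.ext (Fin.ext ?_) (Fin.ext ?_)) <;> simp <;> omega

lemma grid3_adj {a₁ a₂ a₃ : ℕ} {u v : Fin a₁ × Fin a₂ × Fin a₃} :
    (grid3 a₁ a₂ a₃).Adj u v ↔
    ((u.2 = v.2 ∧ ((u.1 : ℕ) + 1 = (v.1 : ℕ) ∨ (v.1 : ℕ) + 1 = (u.1 : ℕ))) ∨
    (u.1 = v.1 ∧ u.2.2 = v.2.2 ∧
      ((u.2.1 : ℕ) + 1 = (v.2.1 : ℕ) ∨ (v.2.1 : ℕ) + 1 = (u.2.1 : ℕ))) ∨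
    (u.1 = v.1 ∧ u.2.1 = v.2.1 ∧
      ((u.2.2 : ℕ) + 1 = (v.2.2 : ℕ) ∨ (v.2.2 : ℕ) + 1 = (u.2.2 : ℕ)))) := Iff.rfl

lemma shift3_adj (d1 d2 d3 : ℕ) (h1 : d1 + b1 ≤ c1) (h2 : d2 + b2 ≤ c2) (h3 : d3 + b3 ≤ c3)
    (u v : Fin b1 × Fin b2 × Fin b3) (h : (grid3 b1 b2 b3).Adj u v) :
    (grid3 c1 c2 c3).Adj (shift3 d1 d2 d3 h1 h2 h3 u) (shift3 d1 d2 d3 h1 h2 h3 v) := by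
  obtain ⟨⟨x, hx⟩, ⟨y, hy⟩, ⟨z, hz⟩⟩ := u
  obtain ⟨⟨x', hx'⟩, ⟨y', hy'⟩, ⟨z', hz'⟩⟩ := v
  rw [grid3_adj] at h ⊢
  simp only [shift3, shift, Prod.mk.injEq, Fin.mk.injEq] at h ⊢
  omega

lemma mem_range_shift3 (d1 d2 d3 : ℕ) (h1 : d1 + b1 ≤ c1) (h2 : d2 + b2 ≤ c2)
    (h3 : d3 + b3 ≤ c3) (w : Fin c1 × Fin c2 × Fin c3)
    (hx1 : d1 ≤ (w.1 : ℕ)) (hx2 : (w.1 : ℕ) < d1 + b1)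
    (hy1 : d2 ≤ (w.2.1 : ℕ)) (hy2 : (w.2.1 : ℕ) < d2 + b2)
    (hz1 : d3 ≤ (w.2.2 : ℕ)) (hz2 : (w.2.2 : ℕ) < d3 + b3) :
    w ∈ Set.range (shift3 d1 d2 d3 h1 h2 h3) := by
  refine ⟨(⟨(w.1 : ℕ) - d1, by omega⟩, ⟨(w.2.1 : ℕ) - d2, by omega⟩,
    ⟨(w.2.2 : ℕ) - d3, by omega⟩), ?_⟩
  refine Prod.ext (Fin.ext ?_) (Prod.ext (Fin.ext ?_) (Fin.ext ?_)) <;>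
    simp [shift3, shift] <;> omega

end Grid
/-- **Theorem (Statement 17).** Recursive upper bound for `m(·,·,·;3)`. -/
theorem recursive_upper_bound (a11 a12 a21 a22 a31 a32 : ℕ)
    (h11 : 1 ≤ a11) (h12 : 1 ≤ a12) (h21 : 1 ≤ a21) (h22 : 1 ≤ a22)
    (h31 : 1 ≤ a31) (h32 : 1 ≤ a32) :
    m3 (a11 + a12) (a21 + a22) (a31 + a32) ≤
      m3 a11 a21 a31 + m3 a11 a22 a32 + m3 a12 a21 a32 + m3 a12 a22 a31 := by
  obtain ⟨A1, hp1, hc1⟩ := exists_minPerc (grid3 a11 a21 a31) 3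
  obtain ⟨A2, hp2, hc2⟩ := exists_minPerc (grid3 a11 a22 a32) 3
  obtain ⟨A3, hp3, hc3⟩ := exists_minPerc (grid3 a12 a21 a32) 3
  obtain ⟨A4, hp4, hc4⟩ := exists_minPerc (grid3 a12 a22 a31) 3
  have e11 : 0 + a11 ≤ a11 + a12 := by omega
  have e12 : a11 + a12 ≤ a11 + a12 := le_refl _
  have e21 : 0 + a21 ≤ a21 + a22 := by omega
  have e22 : a21 + a22 ≤ a21 + a22 := le_refl _
  have e31 : 0 + a31 ≤ a31 + a32 := by omega
  have e32 : a31 + a32 ≤ a31 + a32 := le_refl _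
  set F1 := shift3 0 0 0 e11 e21 e31 with hF1
  set F2 := shift3 0 a21 a31 e11 e22 e32 with hF2
  set F3 := shift3 a11 0 a31 e12 e21 e32 with hF3
  set F4 := shift3 a11 a21 0 e12 e22 e31 with hF4
  set B : Set (Fin (a11 + a12) × Fin (a21 + a22) × Fin (a31 + a32)) :=
    F1 '' A1 ∪ F2 '' A2 ∪ F3 '' A3 ∪ F4 '' A4 with hB
  set S := closure (grid3 (a11 + a12) (a21 + a22) (a31 + a32)) 3 B with hS
  -- the four chosen octants are fully infected
  have hr1 : Set.range F1 ⊆ S :=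
    range_subset_closure _ _ 3 F1 (shift3_injective _ _ _ _ _ _) (shift3_adj _ _ _ _ _ _)
      A1 hp1 B (by rw [hB]; intro x hx; exact Or.inl (Or.inl (Or.inl hx)))
  have hr2 : Set.range F2 ⊆ S :=
    range_subset_closure _ _ 3 F2 (shift3_injective _ _ _ _ _ _) (shift3_adj _ _ _ _ _ _)
      A2 hp2 B (by rw [hB]; intro x hx; exact Or.inl (Or.inl (Or.inr hx)))
  have hr3 : Set.range F3 ⊆ S :=
    range_subset_closure _ _ 3 F3 (shift3_injective _ _ _ _ _ _) (shift3_adj _ _ _ _ _ _)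
      A3 hp3 B (by rw [hB]; intro x hx; exact Or.inl (Or.inr hx))
  have hr4 : Set.range F4 ⊆ S :=
    range_subset_closure _ _ 3 F4 (shift3_injective _ _ _ _ _ _) (shift3_adj _ _ _ _ _ _)
      A4 hp4 B (by rw [hB]; intro x hx; exact Or.inr hx)
  have hoct1 : ∀ w : Fin (a11 + a12) × Fin (a21 + a22) × Fin (a31 + a32),
      (w.1 : ℕ) < a11 → (w.2.1 : ℕ) < a21 → (w.2.2 : ℕ) < a31 → w ∈ S := fun w k1 k2 k3 =>
    hr1 (mem_range_shift3 0 0 0 e11 e21 e31 w (by omega) (by omega) (by omega) (by omega)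
      (by omega) (by omega))
  have hoct2 : ∀ w : Fin (a11 + a12) × Fin (a21 + a22) × Fin (a31 + a32),
      (w.1 : ℕ) < a11 → a21 ≤ (w.2.1 : ℕ) → a31 ≤ (w.2.2 : ℕ) → w ∈ S := fun w k1 k2 k3 =>
    hr2 (mem_range_shift3 0 a21 a31 e11 e22 e32 w (by omega) (by omega) (by omega)
      (by have := w.2.1.isLt; omega) (by omega) (by have := w.2.2.isLt; omega))
  have hoct3 : ∀ w : Fin (a11 + a12) × Fin (a21 + a22) × Fin (a31 + a32),
      a11 ≤ (w.1 : ℕ) → (w.2.1 : ℕ) < a21 → a31 ≤ (w.2.2 : ℕ) → w ∈ S := fun w k1 k2 k3 =>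
    hr3 (mem_range_shift3 a11 0 a31 e12 e21 e32 w (by omega) (by have := w.1.isLt; omega)
      (by omega) (by omega) (by omega) (by have := w.2.2.isLt; omega))
  have hoct4 : ∀ w : Fin (a11 + a12) × Fin (a21 + a22) × Fin (a31 + a32),
      a11 ≤ (w.1 : ℕ) → a21 ≤ (w.2.1 : ℕ) → (w.2.2 : ℕ) < a31 → w ∈ S := fun w k1 k2 k3 =>
    hr4 (mem_range_shift3 a11 a21 0 e12 e22 e31 w (by omega) (by have := w.1.isLt; omega)
      (by omega) (by have := w.2.1.isLt; omega) (by omega) (by omega))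
  have hfill222 : ∀ n : ℕ, ∀ w : Fin (a11 + a12) × Fin (a21 + a22) × Fin (a31 + a32),
      (w.1 : ℕ) + (w.2.1 : ℕ) + (w.2.2 : ℕ) ≤ n →
      a11 ≤ (w.1 : ℕ) → a21 ≤ (w.2.1 : ℕ) → a31 ≤ (w.2.2 : ℕ) → w ∈ S := by
    intro n
    induction n with
    | zero => rintro ⟨⟨x, hxlt⟩, ⟨y, hylt⟩, ⟨z, hzlt⟩⟩ hsum k1 k2 k3; simp at hsum k1 k2 k3; omega
    | succ n ih =>
      rintro ⟨⟨x, hxlt⟩, ⟨y, hylt⟩, ⟨z, hzlt⟩⟩ hsum k1 k2 k3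
      simp only at hsum k1 k2 k3
      set n1 : Fin (a11 + a12) × Fin (a21 + a22) × Fin (a31 + a32) :=
        (⟨x - 1, by omega⟩, ⟨y, hylt⟩, ⟨z, hzlt⟩) with hn1
      set n2 : Fin (a11 + a12) × Fin (a21 + a22) × Fin (a31 + a32) :=
        (⟨x, hxlt⟩, ⟨y - 1, by omega⟩, ⟨z, hzlt⟩) with hn2
      set n3 : Fin (a11 + a12) × Fin (a21 + a22) × Fin (a31 + a32) :=
        (⟨x, hxlt⟩, ⟨y, hylt⟩, ⟨z - 1, by omega⟩) with hn3
      rw [hS]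
      refine infect _ B (n1 := n1) (n2 := n2) (n3 := n3) ?_ ?_ ?_ ?_ ?_ ?_ ?_ ?_ ?_
      · simp [hn1, hn2, Prod.ext_iff, Fin.ext_iff] <;> omega
      · simp [hn1, hn3, Prod.ext_iff, Fin.ext_iff] <;> omega
      · simp [hn2, hn3, Prod.ext_iff, Fin.ext_iff] <;> omega
      · rw [grid3_adj]; simp [hn1, Prod.ext_iff, Fin.ext_iff] <;> omega
      · rw [grid3_adj]; simp [hn2, Prod.ext_iff, Fin.ext_iff] <;> omega
      · rw [grid3_adj]; simp [hn3, Prod.ext_iff, Fin.ext_iff] <;> omega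
      · rw [← hS]
        rcases le_or_gt a11 (x - 1) with hc | hc
        · exact ih n1 (by simp [hn1]; omega) (by simp [hn1]; omega) (by simp [hn1]; omega)
            (by simp [hn1]; omega)
        · exact hoct2 n1 (by simp [hn1]; omega) (by simp [hn1]; omega) (by simp [hn1]; omega)
      · rw [← hS]
        rcases le_or_gt a21 (y - 1) with hc | hc
        · exact ih n2 (by simp [hn2]; omega) (by simp [hn2]; omega) (by simp [hn2]; omega)
            (by simp [hn2]; omega)
        · exact hoct3 n2 (by simp [hn2]; omega) (by simp [hn2]; omega) (by simp [hn2]; omega)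
      · rw [← hS]
        rcases le_or_gt a31 (z - 1) with hc | hc
        · exact ih n3 (by simp [hn3]; omega) (by simp [hn3]; omega) (by simp [hn3]; omega)
            (by simp [hn3]; omega)
        · exact hoct4 n3 (by simp [hn3]; omega) (by simp [hn3]; omega) (by simp [hn3]; omega)
  have hfill112 : ∀ n : ℕ, ∀ w : Fin (a11 + a12) × Fin (a21 + a22) × Fin (a31 + a32),
      (a11 - (w.1 : ℕ)) + (a21 - (w.2.1 : ℕ)) + (w.2.2 : ℕ) ≤ n →
      (w.1 : ℕ) < a11 → (w.2.1 : ℕ) < a21 → a31 ≤ (w.2.2 : ℕ) → w ∈ S := by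
    intro n
    induction n with
    | zero => rintro ⟨⟨x, hxlt⟩, ⟨y, hylt⟩, ⟨z, hzlt⟩⟩ hsum k1 k2 k3; simp at hsum k1 k2 k3; omega
    | succ n ih =>
      rintro ⟨⟨x, hxlt⟩, ⟨y, hylt⟩, ⟨z, hzlt⟩⟩ hsum k1 k2 k3
      simp only at hsum k1 k2 k3
      set n1 : Fin (a11 + a12) × Fin (a21 + a22) × Fin (a31 + a32) :=
        (⟨x + 1, by omega⟩, ⟨y, hylt⟩, ⟨z, hzlt⟩) with hn1
      set n2 : Fin (a11 + a12) × Fin (a21 + a22) × Fin (a31 + a32) :=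
        (⟨x, hxlt⟩, ⟨y + 1, by omega⟩, ⟨z, hzlt⟩) with hn2
      set n3 : Fin (a11 + a12) × Fin (a21 + a22) × Fin (a31 + a32) :=
        (⟨x, hxlt⟩, ⟨y, hylt⟩, ⟨z - 1, by omega⟩) with hn3
      rw [hS]
      refine infect _ B (n1 := n1) (n2 := n2) (n3 := n3) ?_ ?_ ?_ ?_ ?_ ?_ ?_ ?_ ?_
      · simp [hn1, hn2, Prod.ext_iff, Fin.ext_iff] <;> omega
      · simp [hn1, hn3, Prod.ext_iff, Fin.ext_iff] <;> omega
      · simp [hn2, hn3, Prod.ext_iff, Fin.ext_iff] <;> omega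
      · rw [grid3_adj]; simp [hn1, Prod.ext_iff, Fin.ext_iff] <;> omega
      · rw [grid3_adj]; simp [hn2, Prod.ext_iff, Fin.ext_iff] <;> omega
      · rw [grid3_adj]; simp [hn3, Prod.ext_iff, Fin.ext_iff] <;> omega
      · rw [← hS]
        rcases lt_or_ge (x + 1) a11 with hc | hc
        · exact ih n1 (by simp [hn1]; omega) (by simp [hn1]; omega) (by simp [hn1]; omega)
            (by simp [hn1]; omega)
        · exact hoct3 n1 (by simp [hn1]; omega) (by simp [hn1]; omega) (by simp [hn1]; omega)
      · rw [← hS]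
        rcases lt_or_ge (y + 1) a21 with hc | hc
        · exact ih n2 (by simp [hn2]; omega) (by simp [hn2]; omega) (by simp [hn2]; omega)
            (by simp [hn2]; omega)
        · exact hoct2 n2 (by simp [hn2]; omega) (by simp [hn2]; omega) (by simp [hn2]; omega)
      · rw [← hS]
        rcases le_or_gt a31 (z - 1) with hc | hc
        · exact ih n3 (by simp [hn3]; omega) (by simp [hn3]; omega) (by simp [hn3]; omega)
            (by simp [hn3]; omega)
        · exact hoct1 n3 (by simp [hn3]; omega) (by simp [hn3]; omega) (by simp [hn3]; omega)
  have hfill121 : ∀ n : ℕ, ∀ w : Fin (a11 + a12) × Fin (a21 + a22) × Fin (a31 + a32),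
      (a11 - (w.1 : ℕ)) + (w.2.1 : ℕ) + (a31 - (w.2.2 : ℕ)) ≤ n →
      (w.1 : ℕ) < a11 → a21 ≤ (w.2.1 : ℕ) → (w.2.2 : ℕ) < a31 → w ∈ S := by
    intro n
    induction n with
    | zero => rintro ⟨⟨x, hxlt⟩, ⟨y, hylt⟩, ⟨z, hzlt⟩⟩ hsum k1 k2 k3; simp at hsum k1 k2 k3; omega
    | succ n ih =>
      rintro ⟨⟨x, hxlt⟩, ⟨y, hylt⟩, ⟨z, hzlt⟩⟩ hsum k1 k2 k3
      simp only at hsum k1 k2 k3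
      set n1 : Fin (a11 + a12) × Fin (a21 + a22) × Fin (a31 + a32) :=
        (⟨x + 1, by omega⟩, ⟨y, hylt⟩, ⟨z, hzlt⟩) with hn1
      set n2 : Fin (a11 + a12) × Fin (a21 + a22) × Fin (a31 + a32) :=
        (⟨x, hxlt⟩, ⟨y - 1, by omega⟩, ⟨z, hzlt⟩) with hn2
      set n3 : Fin (a11 + a12) × Fin (a21 + a22) × Fin (a31 + a32) :=
        (⟨x, hxlt⟩, ⟨y, hylt⟩, ⟨z + 1, by omega⟩) with hn3
      rw [hS]
      refine infect _ B (n1 := n1) (n2 := n2) (n3 := n3) ?_ ?_ ?_ ?_ ?_ ?_ ?_ ?_ ?_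
      · simp [hn1, hn2, Prod.ext_iff, Fin.ext_iff] <;> omega
      · simp [hn1, hn3, Prod.ext_iff, Fin.ext_iff] <;> omega
      · simp [hn2, hn3, Prod.ext_iff, Fin.ext_iff] <;> omega
      · rw [grid3_adj]; simp [hn1, Prod.ext_iff, Fin.ext_iff] <;> omega
      · rw [grid3_adj]; simp [hn2, Prod.ext_iff, Fin.ext_iff] <;> omega
      · rw [grid3_adj]; simp [hn3, Prod.ext_iff, Fin.ext_iff] <;> omega
      · rw [← hS]
        rcases lt_or_ge (x + 1) a11 with hc | hc
        · exact ih n1 (by simp [hn1]; omega) (by simp [hn1]; omega) (by simp [hn1]; omega)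
            (by simp [hn1]; omega)
        · exact hoct4 n1 (by simp [hn1]; omega) (by simp [hn1]; omega) (by simp [hn1]; omega)
      · rw [← hS]
        rcases le_or_gt a21 (y - 1) with hc | hc
        · exact ih n2 (by simp [hn2]; omega) (by simp [hn2]; omega) (by simp [hn2]; omega)
            (by simp [hn2]; omega)
        · exact hoct1 n2 (by simp [hn2]; omega) (by simp [hn2]; omega) (by simp [hn2]; omega)
      · rw [← hS]
        rcases lt_or_ge (z + 1) a31 with hc | hc
        · exact ih n3 (by simp [hn3]; omega) (by simp [hn3]; omega) (by simp [hn3]; omega)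
            (by simp [hn3]; omega)
        · exact hoct2 n3 (by simp [hn3]; omega) (by simp [hn3]; omega) (by simp [hn3]; omega)
  have hfill211 : ∀ n : ℕ, ∀ w : Fin (a11 + a12) × Fin (a21 + a22) × Fin (a31 + a32),
      (w.1 : ℕ) + (a21 - (w.2.1 : ℕ)) + (a31 - (w.2.2 : ℕ)) ≤ n →
      a11 ≤ (w.1 : ℕ) → (w.2.1 : ℕ) < a21 → (w.2.2 : ℕ) < a31 → w ∈ S := by
    intro n
    induction n with
    | zero => rintro ⟨⟨x, hxlt⟩, ⟨y, hylt⟩, ⟨z, hzlt⟩⟩ hsum k1 k2 k3; simp at hsum k1 k2 k3; omega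
    | succ n ih =>
      rintro ⟨⟨x, hxlt⟩, ⟨y, hylt⟩, ⟨z, hzlt⟩⟩ hsum k1 k2 k3
      simp only at hsum k1 k2 k3
      set n1 : Fin (a11 + a12) × Fin (a21 + a22) × Fin (a31 + a32) :=
        (⟨x - 1, by omega⟩, ⟨y, hylt⟩, ⟨z, hzlt⟩) with hn1
      set n2 : Fin (a11 + a12) × Fin (a21 + a22) × Fin (a31 + a32) :=
        (⟨x, hxlt⟩, ⟨y + 1, by omega⟩, ⟨z, hzlt⟩) with hn2
      set n3 : Fin (a11 + a12) × Fin (a21 + a22) × Fin (a31 + a32) :=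
        (⟨x, hxlt⟩, ⟨y, hylt⟩, ⟨z + 1, by omega⟩) with hn3
      rw [hS]
      refine infect _ B (n1 := n1) (n2 := n2) (n3 := n3) ?_ ?_ ?_ ?_ ?_ ?_ ?_ ?_ ?_
      · simp [hn1, hn2, Prod.ext_iff, Fin.ext_iff] <;> omega
      · simp [hn1, hn3, Prod.ext_iff, Fin.ext_iff] <;> omega
      · simp [hn2, hn3, Prod.ext_iff, Fin.ext_iff] <;> omega
      · rw [grid3_adj]; simp [hn1, Prod.ext_iff, Fin.ext_iff] <;> omega
      · rw [grid3_adj]; simp [hn2, Prod.ext_iff, Fin.ext_iff] <;> omega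
      · rw [grid3_adj]; simp [hn3, Prod.ext_iff, Fin.ext_iff] <;> omega
      · rw [← hS]
        rcases le_or_gt a11 (x - 1) with hc | hc
        · exact ih n1 (by simp [hn1]; omega) (by simp [hn1]; omega) (by simp [hn1]; omega)
            (by simp [hn1]; omega)
        · exact hoct1 n1 (by simp [hn1]; omega) (by simp [hn1]; omega) (by simp [hn1]; omega)
      · rw [← hS]
        rcases lt_or_ge (y + 1) a21 with hc | hc
        · exact ih n2 (by simp [hn2]; omega) (by simp [hn2]; omega) (by simp [hn2]; omega)
            (by simp [hn2]; omega)
        · exact hoct4 n2 (by simp [hn2]; omega) (by simp [hn2]; omega) (by simp [hn2]; omega)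
      · rw [← hS]
        rcases lt_or_ge (z + 1) a31 with hc | hc
        · exact ih n3 (by simp [hn3]; omega) (by simp [hn3]; omega) (by simp [hn3]; omega)
            (by simp [hn3]; omega)
        · exact hoct3 n3 (by simp [hn3]; omega) (by simp [hn3]; omega) (by simp [hn3]; omega)
  have huniv : ∀ w : Fin (a11 + a12) × Fin (a21 + a22) × Fin (a31 + a32), w ∈ S := by
    intro w
    rcases lt_or_ge (w.1 : ℕ) a11 with c1 | c1 <;>
      rcases lt_or_ge (w.2.1 : ℕ) a21 with c2 | c2 <;>
      rcases lt_or_ge (w.2.2 : ℕ) a31 with c3 | c3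
    · exact hoct1 w c1 c2 c3
    · exact hfill112 _ w le_rfl c1 c2 c3
    · exact hfill121 _ w le_rfl c1 c2 c3
    · exact hoct2 w c1 c2 c3
    · exact hfill211 _ w le_rfl c1 c2 c3
    · exact hoct3 w c1 c2 c3
    · exact hoct4 w c1 c2 c3
    · exact hfill222 _ w le_rfl c1 c2 c3
  have hperc : Percolates (grid3 (a11 + a12) (a21 + a22) (a31 + a32)) 3 B := by
    rw [Percolates, ← hS]
    exact Set.eq_univ_iff_forall.mpr huniv
  have hle : m3 (a11 + a12) (a21 + a22) (a31 + a32) ≤ B.ncard := minPerc_le _ _ _ hperc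
  have hcard : B.ncard ≤ m3 a11 a21 a31 + m3 a11 a22 a32 + m3 a12 a21 a32 + m3 a12 a22 a31 := by
    rw [hB]
    calc (F1 '' A1 ∪ F2 '' A2 ∪ F3 '' A3 ∪ F4 '' A4).ncard
        ≤ (F1 '' A1 ∪ F2 '' A2 ∪ F3 '' A3).ncard + (F4 '' A4).ncard := Set.ncard_union_le _ _
      _ ≤ (F1 '' A1 ∪ F2 '' A2).ncard + (F3 '' A3).ncard + (F4 '' A4).ncard := by
          have := Set.ncard_union_le (F1 '' A1 ∪ F2 '' A2) (F3 '' A3); omega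
      _ ≤ (F1 '' A1).ncard + (F2 '' A2).ncard + (F3 '' A3).ncard + (F4 '' A4).ncard := by
          have := Set.ncard_union_le (F1 '' A1) (F2 '' A2); omega
      _ = _ := by
          rw [Set.ncard_image_of_injective A1 (shift3_injective _ _ _ _ _ _),
            Set.ncard_image_of_injective A2 (shift3_injective _ _ _ _ _ _),
            Set.ncard_image_of_injective A3 (shift3_injective _ _ _ _ _ _),
            Set.ncard_image_of_injective A4 (shift3_injective _ _ _ _ _ _), hc1, hc2, hc3, hc4]
          rfl
  omega
end BP
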